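/- Let k ≥ 3, let G = ([n], E) be a labeled graph, and suppose the word w 1^k-represents G. Let ij be an edge of G, let π be any permutation (written as a word) of [n] \ {i, j}, and let p(w) be the initial permutation of w. Then the word w' = i^{k-1} π i p(w) w 1^k-represents the graph G' = ([n], E \ {ij}). -/

import Mathlib

/-- `red w` replaces each occurrence of the `i`-th smallest letter of `w` by `i`. -/
def red (w : List ℕ) : List ℕ :=
  w.map (fun x => (w.toFinset.filter (· < x)).card + 1)

/-- `w` has a `u`-match (starting at some position `i`): a factor of `w` of length `|u|`
whose reduction equals `red u` (which is `u` itself when `red u = u`). -/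
def HasMatch (u w : List ℕ) : Prop :=
  ∃ i, i + u.length ≤ w.length ∧ red ((w.drop i).take u.length) = red u

/-- The word `w` `u`-represents the labeled graph with vertex set `V` and adjacency `E`:
the letters occurring in `w` are exactly `V`, and two distinct vertices are adjacent
iff `w` restricted to these two letters has no `u`-match. -/
def Represents (u w : List ℕ) (V : Finset ℕ) (E : ℕ → ℕ → Prop) : Prop :=
  (∀ x, x ∈ w ↔ x ∈ V) ∧
  ∀ x ∈ V, ∀ y ∈ V, x ≠ y →
    (E x y ↔ ¬ HasMatch u (w.filter (fun z => z = x ∨ z = y)))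

/-- The initial permutation `p(w)` of a word: keep only the leftmost occurrence
of each letter. -/
def initPerm : List ℕ → List ℕ
  | [] => []
  | a :: l => a :: initPerm (l.filter (fun x => x ≠ a))
termination_by l => l.length
decreasing_by
  first
  | exact Nat.lt_succ_of_le (List.length_unattach.trans_le ((List.length_filter_le _ _).trans List.length_attach.le))
  | (simp only [List.length_unattach]; exact Nat.lt_succ_of_le ((List.length_filter_le _ _).trans List.length_attach.le))
  | (simp_wf; exact Nat.lt_succ_of_le (by simpa using List.length_filter_le _ _))


open List in
lemma red_eq_one (L : List ℕ) : red L = List.replicate L.length 1 ↔ ∀ x ∈ L, ∀ y ∈ L, x = y := by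
  unfold red
  rw [List.eq_replicate_iff]
  constructor
  · rintro ⟨-, h⟩ x hx y hy
    have hx1 : (L.toFinset.filter (· < x)).card + 1 = 1 := h _ (List.mem_map_of_mem hx)
    have hy1 : (L.toFinset.filter (· < y)).card + 1 = 1 := h _ (List.mem_map_of_mem hy)
    have hx2 : ¬ y < x := by
      have h0 := Finset.card_eq_zero.mp (by omega : (L.toFinset.filter (· < x)).card = 0)
      exact fun hlt => (Finset.filter_eq_empty_iff.mp h0 (List.mem_toFinset.mpr hy)) hlt
    have hy2 : ¬ x < y := by
      have h0 := Finset.card_eq_zero.mp (by omega : (L.toFinset.filter (· < y)).card = 0)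
      exact fun hlt => (Finset.filter_eq_empty_iff.mp h0 (List.mem_toFinset.mpr hx)) hlt
    omega
  · intro h
    refine ⟨by simp, ?_⟩
    intro b hb
    obtain ⟨x, hx, rfl⟩ := List.mem_map.mp hb
    have h0 : L.toFinset.filter (· < x) = ∅ := by
      apply Finset.filter_eq_empty_iff.mpr
      intro z hz
      rw [h z (List.mem_toFinset.mp hz) x hx]
      exact lt_irrefl x
    simp [h0]

lemma red_replicate (m x : ℕ) : red (List.replicate m x) = List.replicate m 1 := by
  have h := (red_eq_one (List.replicate m x)).mpr ?_
  · simpa using h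
  · intro a ha b hb
    rw [List.eq_of_mem_replicate ha, List.eq_of_mem_replicate hb]

lemma hasMatch_iff {k : ℕ} (hk : 1 ≤ k) (v : List ℕ) :
    HasMatch (List.replicate k 1) v ↔ ∃ x, List.replicate k x <:+: v := by
  unfold HasMatch
  simp only [List.length_replicate]
  constructor
  · rintro ⟨i, hi, heq⟩
    rw [red_replicate] at heq
    have hlen : ((v.drop i).take k).length = k := by
      simp only [List.length_take, List.length_drop]
      omega
    have hall := (red_eq_one ((v.drop i).take k)).mp (by rw [hlen]; exact heq)
    have hne : ((v.drop i).take k) ≠ [] := by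
      intro h; rw [h] at hlen; simp at hlen; omega
    obtain ⟨a, ha⟩ := List.exists_mem_of_ne_nil _ hne
    refine ⟨a, ?_⟩
    have hrep : (v.drop i).take k = List.replicate k a :=
      List.eq_replicate_iff.mpr ⟨hlen, fun b hb => hall b hb a ha⟩
    rw [← hrep]
    exact (List.take_prefix _ _).isInfix.trans (List.drop_suffix _ _).isInfix
  · rintro ⟨x, s, t, hst⟩
    refine ⟨s.length, ?_, ?_⟩
    · have := congrArg List.length hst
      simp at this
      omega
    · have hdrop : v.drop s.length = List.replicate k x ++ t := by
        rw [← hst, List.append_assoc, List.drop_left]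
      rw [hdrop, List.take_left' (by simp), red_replicate, red_replicate]

lemma infix_append_split {P W : List ℕ} {k z : ℕ}
    (h : List.replicate k z <:+: P ++ W) :
    List.replicate k z <:+: P ∨ List.replicate k z <:+: W ∨
      ∃ a b, a + b = k ∧ 1 ≤ a ∧ 1 ≤ b ∧
        List.replicate a z <:+ P ∧ List.replicate b z <+: W := by
  obtain ⟨s, t, hst⟩ := h
  rw [List.append_assoc] at hst
  rcases List.append_eq_append_iff.mp hst with ⟨a', h1, h2⟩ | ⟨c', h1, h2⟩
  · rcases List.append_eq_append_iff.mp h2 with ⟨b', hb1, hb2⟩ | ⟨c', hc1, hc2⟩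
    · left
      exact ⟨s, b', by rw [h1, hb1, List.append_assoc]⟩
    · have ha' : a' = List.replicate a'.length z := by
        refine List.eq_replicate_iff.mpr ⟨rfl, ?_⟩
        intro b hb
        exact List.eq_of_mem_replicate (by rw [hc1]; exact List.mem_append_left _ hb)
      have hc' : c' = List.replicate c'.length z := by
        refine List.eq_replicate_iff.mpr ⟨rfl, ?_⟩
        intro b hb
        exact List.eq_of_mem_replicate (by rw [hc1]; exact List.mem_append_right _ hb)
      have hlen : a'.length + c'.length = k := by
        have := congrArg List.length hc1
        simpa using this.symm
      rcases Nat.eq_zero_or_pos a'.length with ha0 | ha1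
      · right; left
        have hanil : a' = [] := List.length_eq_zero_iff.mp ha0
        rw [hanil, List.nil_append] at hc1
        exact ⟨[], t, by rw [hc2, ← hc1, List.nil_append]⟩
      rcases Nat.eq_zero_or_pos c'.length with hc0 | hc1p
      · left
        have hcnil : c' = [] := List.length_eq_zero_iff.mp hc0
        rw [hcnil, List.append_nil] at hc1
        exact ⟨s, [], by rw [h1, ← hc1, List.append_nil]⟩
      · right; right
        exact ⟨a'.length, c'.length, hlen, ha1, hc1p,
          ⟨s, by rw [h1, ← ha']⟩, ⟨t, by rw [hc2, ← hc']⟩⟩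
  · right; left
    exact ⟨c', t, by rw [h2, List.append_assoc]⟩

lemma prefix_replicate_head? {W : List ℕ} {b z : ℕ} (hb : 1 ≤ b)
    (h : List.replicate b z <+: W) : W.head? = some z := by
  obtain ⟨t, ht⟩ := h
  obtain ⟨n, rfl⟩ : ∃ n, b = n + 1 := ⟨b - 1, by omega⟩
  rw [← ht]
  simp [List.replicate_succ]

lemma suffix_replicate_getLast? {P : List ℕ} {a z : ℕ} (ha : 1 ≤ a)
    (h : List.replicate a z <:+ P) : P.getLast? = some z := by
  obtain ⟨t, ht⟩ := h
  obtain ⟨n, rfl⟩ : ∃ n, a = n + 1 := ⟨a - 1, by omega⟩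
  rw [← ht, List.getLast?_append, List.replicate_succ', List.getLast?_append]
  simp

lemma mem_of_suffix_replicate {P : List ℕ} {a z : ℕ} (ha : 1 ≤ a)
    (h : List.replicate a z <:+ P) : z ∈ P := by
  apply h.sublist.subset
  simp [List.mem_replicate]
  omega

lemma no_two_run {D W : List ℕ} (hD : D.Nodup) (h2 : 2 ≤ D.length) {b z : ℕ} (hb : 2 ≤ b)
    (h : List.replicate b z <+: D ++ W) : False := by
  have h2' : List.replicate 2 z <+: D ++ W := by
    refine List.IsPrefix.trans ⟨List.replicate (b-2) z, ?_⟩ h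
    rw [← List.replicate_add]
    congr 1
    omega
  have ht : List.replicate 2 z = (D ++ W).take 2 := by
    have := List.prefix_iff_eq_take.mp h2'
    simpa using this
  rw [List.take_append_of_le_length h2] at ht
  have hcount : List.count z (D.take 2) ≤ 1 :=
    le_trans ((List.take_sublist _ _).count_le z) (List.nodup_iff_count_le_one.mp hD z)
  rw [← ht] at hcount
  simp [List.count_replicate] at hcount

lemma getLast?_ne_head?' {l : List ℕ} (hl : l.Nodup) (h2 : 2 ≤ l.length) :
    l.getLast? ≠ l.head? := by
  rcases l with _ | ⟨a, _ | ⟨b, t⟩⟩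
  · simp at h2
  · simp at h2
  · rw [List.getLast?_cons_cons, List.head?_cons, List.getLast?_eq_getLast (l := b :: t) (by simp)]
    intro h
    have ha : (b::t).getLast (by simp) = a := by injection h
    have : a ∈ b :: t := ha ▸ List.getLast_mem _
    exact (List.nodup_cons.mp hl).1 this

lemma two_le_length {l : List ℕ} {x y : ℕ} (hx : x ∈ l) (hy : y ∈ l) (hxy : x ≠ y) :
    2 ≤ l.length := by
  rcases l with _ | ⟨a, _ | ⟨b, t⟩⟩
  · simp at hx
  · simp at hx hy
    exact absurd (hx.trans hy.symm) hxy
  · simp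

lemma mem_initPerm : ∀ (l : List ℕ) (x : ℕ), x ∈ initPerm l ↔ x ∈ l
  | [], x => by rw [initPerm]
  | a :: l, x => by
    rw [initPerm]
    by_cases hxa : x = a
    · subst hxa; simp
    · simp only [List.mem_cons, mem_initPerm (l.filter (fun y => y ≠ a)) x, List.mem_filter]
      simp [hxa]
  termination_by l => l.length
  decreasing_by exact Nat.lt_succ_of_le (List.length_filter_le _ _)

lemma initPerm_nodup : ∀ (l : List ℕ), (initPerm l).Nodup
  | [] => by rw [initPerm]; exact List.nodup_nil
  | a :: l => by
    rw [initPerm, List.nodup_cons]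
    refine ⟨?_, initPerm_nodup _⟩
    rw [mem_initPerm]
    simp
  termination_by l => l.length
  decreasing_by exact Nat.lt_succ_of_le (List.length_filter_le _ _)

lemma initPerm_head? (l : List ℕ) : (initPerm l).head? = l.head? := by
  cases l <;> rw [initPerm] <;> rfl

lemma initPerm_filter (p : ℕ → Bool) : ∀ (l : List ℕ),
    initPerm (l.filter p) = (initPerm l).filter p
  | [] => by rw [List.filter_nil, show initPerm [] = [] from by rw [initPerm], List.filter_nil]
  | a :: l => by
    conv_rhs => rw [initPerm]
    by_cases hpa : p a
    · rw [List.filter_cons_of_pos hpa, initPerm, List.filter_cons_of_pos hpa]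
      congr 1
      rw [List.filter_comm]
      exact initPerm_filter p (l.filter (fun x => x ≠ a))
    · rw [List.filter_cons_of_neg hpa, List.filter_cons_of_neg hpa,
        ← initPerm_filter p (l.filter (fun x => x ≠ a)), List.filter_comm]
      congr 1
      symm
      apply List.filter_eq_self.mpr
      intro b hb
      simp only [List.mem_filter] at hb
      simp only [ne_eq, decide_eq_true_eq]
      intro hba
      rw [hba] at hb
      exact hpa hb.2
  termination_by l => l.length
  decreasing_by all_goals exact Nat.lt_succ_of_le (List.length_filter_le _ _)

lemma key_general {k : ℕ} (hk : 3 ≤ k) (B W : List ℕ) (x y : ℕ) (hxy : x ≠ y)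
    (hx : x ∈ W) (hy : y ∈ W) (hB : ∀ z, List.count z B ≤ 1) :
    HasMatch (List.replicate k 1) (B ++ (initPerm W ++ W)) ↔
      HasMatch (List.replicate k 1) W := by
  have hk1 : 1 ≤ k := by omega
  rw [hasMatch_iff hk1, hasMatch_iff hk1]
  have hxD : x ∈ initPerm W := (mem_initPerm _ _).mpr hx
  have hyD : y ∈ initPerm W := (mem_initPerm _ _).mpr hy
  have hDlen : 2 ≤ (initPerm W).length := two_le_length hxD hyD hxy
  have hDnd : (initPerm W).Nodup := initPerm_nodup _
  constructor
  · rintro ⟨z, hz⟩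
    refine ⟨z, ?_⟩
    rcases infix_append_split hz with h | h | ⟨a, b, hab, ha, hb, hsuf, hpre⟩
    · exfalso
      have h1 := h.sublist.count_le z
      simp [List.count_replicate] at h1
      have := hB z
      omega
    · rcases infix_append_split h with h' | h' | ⟨a, b, hab, ha, hb, hsuf, hpre⟩
      · exfalso
        have h1 := h'.sublist.count_le z
        simp [List.count_replicate] at h1
        have := List.nodup_iff_count_le_one.mp hDnd z
        omega
      · exact h'
      · exfalso
        have h1 := suffix_replicate_getLast? ha hsuf
        have h2 := prefix_replicate_head? hb hpre
        exact getLast?_ne_head?' hDnd hDlen (by rw [h1, initPerm_head?, h2])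
    · exfalso
      rcases Nat.lt_or_ge b 2 with hb2 | hb2
      · have h1 := hsuf.sublist.count_le z
        simp [List.count_replicate] at h1
        have := hB z
        omega
      · exact no_two_run hDnd hDlen hb2 hpre
  · rintro ⟨z, hz⟩
    exact ⟨z, (hz.trans (List.suffix_append _ _).isInfix).trans
      (List.suffix_append _ _).isInfix⟩

lemma key_i {k : ℕ} (hk : 3 ≤ k) (i y : ℕ) (hiy : i ≠ y) (B W : List ℕ)
    (hBne : B ≠ []) (hBy : ∀ z ∈ B, z = y) (hB : ∀ z, List.count z B ≤ 1)
    (hiW : i ∈ W) (hyW : y ∈ W) :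
    HasMatch (List.replicate k 1)
      (List.replicate (k-1) i ++ (B ++ ([i] ++ (initPerm W ++ W)))) ↔
      HasMatch (List.replicate k 1) W := by
  have hk1 : 1 ≤ k := by omega
  rw [hasMatch_iff hk1, hasMatch_iff hk1]
  have hxD : i ∈ initPerm W := (mem_initPerm _ _).mpr hiW
  have hyD : y ∈ initPerm W := (mem_initPerm _ _).mpr hyW
  have hDlen : 2 ≤ (initPerm W).length := two_le_length hxD hyD hiy
  have hDnd : (initPerm W).Nodup := initPerm_nodup _
  constructor
  · rintro ⟨z, hz⟩
    refine ⟨z, ?_⟩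
    rcases infix_append_split hz with h | h | ⟨a, b, hab, ha, hb, hsuf, hpre⟩
    · exfalso
      have h1 := h.length_le
      simp at h1
      omega
    · rcases infix_append_split h with h' | h' | ⟨a, b, hab, ha, hb, hsuf, hpre⟩
      · exfalso
        have h1 := h'.sublist.count_le z
        simp [List.count_replicate] at h1
        have := hB z
        omega
      · rcases infix_append_split h' with h'' | h'' | ⟨a, b, hab, ha, hb, hsuf, hpre⟩
        · exfalso
          have h1 := h''.length_le
          simp at h1
          omega
        · rcases infix_append_split h'' with h3 | h3 | ⟨a, b, hab, ha, hb, hsuf, hpre⟩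
          · exfalso
            have h1 := h3.sublist.count_le z
            simp [List.count_replicate] at h1
            have := List.nodup_iff_count_le_one.mp hDnd z
            omega
          · exact h3
          · exfalso
            have h1 := suffix_replicate_getLast? ha hsuf
            have h2 := prefix_replicate_head? hb hpre
            exact getLast?_ne_head?' hDnd hDlen (by rw [h1, initPerm_head?, h2])
        · exfalso
          have ha1 : a ≤ 1 := by simpa using hsuf.length_le
          exact no_two_run hDnd hDlen (by omega) hpre
      · exfalso
        have hz1 : z = y := hBy z (mem_of_suffix_replicate ha hsuf)
        have hz2 : ([i] ++ (initPerm W ++ W)).head? = some z :=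
          prefix_replicate_head? hb hpre
        simp at hz2
        exact hiy (hz2 ▸ hz1 ▸ rfl)
    · exfalso
      have hz1 : z = i := by
        have := mem_of_suffix_replicate ha hsuf
        exact List.eq_of_mem_replicate this
      rcases B with _ | ⟨b0, B'⟩
      · exact hBne rfl
      · have hz2 : ((b0 :: B') ++ (([i] ++ (initPerm W ++ W)))).head? = some z :=
          prefix_replicate_head? hb hpre
        simp at hz2
        have : b0 = y := hBy b0 (by simp)
        omega
  · rintro ⟨z, hz⟩
    refine ⟨z, hz.trans ?_⟩
    have s1 : W <:+ initPerm W ++ W := List.suffix_append _ _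
    have s2 : initPerm W ++ W <:+ [i] ++ (initPerm W ++ W) := List.suffix_append _ _
    have s3 : [i] ++ (initPerm W ++ W) <:+ B ++ ([i] ++ (initPerm W ++ W)) :=
      List.suffix_append _ _
    have s4 : B ++ ([i] ++ (initPerm W ++ W)) <:+
        List.replicate (k-1) i ++ (B ++ ([i] ++ (initPerm W ++ W))) :=
      List.suffix_append _ _
    exact (((s1.trans s2).trans s3).trans s4).isInfix

lemma replicate_split {k : ℕ} (hk : 1 ≤ k) (i : ℕ) :
    List.replicate k i = List.replicate (k-1) i ++ [i] := by
  conv_lhs => rw [show k = (k-1)+1 by omega]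
  rw [List.replicate_succ']

theorem remove_edge_one_pow_k (k n : ℕ) (hk : 3 ≤ k)
    (E : ℕ → ℕ → Prop) (hsym : Symmetric E) (hirr : ∀ x, ¬ E x x)
    (w : List ℕ) (hw : Represents (List.replicate k 1) w (Finset.Icc 1 n) E)
    (i j : ℕ) (hi : i ∈ Finset.Icc 1 n) (hj : j ∈ Finset.Icc 1 n) (hij : i ≠ j)
    (he : E i j)
    (π : List ℕ)
    (hπ : π.Perm ((((Finset.Icc 1 n).erase i).erase j).sort (· ≤ ·))) :
    Represents (List.replicate k 1)
      (List.replicate (k - 1) i ++ π ++ [i] ++ initPerm w ++ w)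
      (Finset.Icc 1 n)
      (fun x y => E x y ∧ ¬ ((x = i ∧ y = j) ∨ (x = j ∧ y = i))) := by
  obtain ⟨hw1, hw2⟩ := hw
  have hk1 : 1 ≤ k := by omega
  have hπnd : π.Nodup := hπ.nodup_iff.mpr (Finset.sort_nodup _ _)
  have hπmem : ∀ z, z ∈ π ↔ (z ∈ Finset.Icc 1 n ∧ z ≠ i ∧ z ≠ j) := by
    intro z
    rw [hπ.mem_iff, Finset.mem_sort, Finset.mem_erase, Finset.mem_erase]
    tauto
  constructor
  · intro x
    simp only [List.mem_append, List.mem_replicate, List.mem_singleton]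
    constructor
    · rintro ((((⟨-, rfl⟩ | hx) | rfl) | hx) | hx)
      · exact hi
      · exact ((hπmem x).mp hx).1
      · exact hi
      · exact (hw1 x).mp ((mem_initPerm w x).mp hx)
      · exact (hw1 x).mp hx
    · intro hx
      exact Or.inr ((hw1 x).mpr hx)
  · intro x hx y hy hxy
    beta_reduce
    by_cases hcase : (x = i ∧ y = j) ∨ (x = j ∧ y = i)
    · refine ⟨fun h => absurd hcase h.2, fun h => absurd ?_ h⟩
      rw [hasMatch_iff hk1]
      refine ⟨i, ?_⟩
      have hA : (List.replicate (k-1) i).filter (fun z => decide (z = x ∨ z = y)) =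
          List.replicate (k-1) i := by
        rw [List.filter_replicate]
        rcases hcase with ⟨rfl, rfl⟩ | ⟨rfl, rfl⟩ <;> simp
      have hπf : π.filter (fun z => decide (z = x ∨ z = y)) = [] := by
        rw [List.filter_eq_nil_iff]
        intro z hz
        have hz' := (hπmem z).mp hz
        rcases hcase with ⟨rfl, rfl⟩ | ⟨rfl, rfl⟩ <;>
          simp only [decide_eq_true_eq, not_or]
        · exact ⟨hz'.2.1, hz'.2.2⟩
        · exact ⟨hz'.2.2, hz'.2.1⟩
      have hIf : ([i].filter (fun z => decide (z = x ∨ z = y))) = [i] := by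
        rcases hcase with ⟨rfl, rfl⟩ | ⟨rfl, rfl⟩ <;> simp
      rw [List.filter_append, List.filter_append, List.filter_append, List.filter_append,
        hA, hπf, hIf]
      simp only [List.append_nil, List.append_assoc, List.nil_append]
      refine List.IsPrefix.isInfix ⟨(initPerm w).filter (fun z => decide (z = x ∨ z = y)) ++ w.filter (fun z => decide (z = x ∨ z = y)), ?_⟩
      rw [replicate_split hk1 i, List.append_assoc]
    · rw [and_iff_left hcase, hw2 x hx y hy hxy]
      have hxw : x ∈ w.filter (fun z => decide (z = x ∨ z = y)) := by
        rw [List.mem_filter]; exact ⟨(hw1 x).mpr hx, by simp⟩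
      have hyw : y ∈ w.filter (fun z => decide (z = x ∨ z = y)) := by
        rw [List.mem_filter]; exact ⟨(hw1 y).mpr hy, by simp⟩
      have hπcount : ∀ z, List.count z (π.filter (fun z => decide (z = x ∨ z = y))) ≤ 1 :=
        List.nodup_iff_count_le_one.mp (hπnd.filter _)
      rw [List.filter_append, List.filter_append, List.filter_append, List.filter_append,
        ← initPerm_filter]
      by_cases hxi : x = i
      · subst hxi
        have hyj : y ≠ j := fun h => hcase (Or.inl ⟨rfl, h⟩)
        have hyi : x ≠ y := hxy
        have hA : (List.replicate (k-1) x).filter (fun z => decide (z = x ∨ z = y)) =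
            List.replicate (k-1) x := by
          rw [List.filter_replicate]; simp
        have hIf : [x].filter (fun z => decide (z = x ∨ z = y)) = [x] := by simp
        rw [hA, hIf]
        have hBy : ∀ z ∈ π.filter (fun z => decide (z = x ∨ z = y)), z = y := by
          intro z hz
          rw [List.mem_filter] at hz
          have h1 := (hπmem z).mp hz.1
          have h2 := hz.2
          simp only [decide_eq_true_eq] at h2
          tauto
        have hBne : π.filter (fun z => decide (z = x ∨ z = y)) ≠ [] := by
          apply List.ne_nil_of_mem (a := y)
          rw [List.mem_filter]
          exact ⟨(hπmem y).mpr ⟨hy, fun h => hxy h.symm, hyj⟩, by simp⟩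
        have hkey := key_i hk x y hyi _ _ hBne hBy hπcount hxw hyw
        simp only [List.append_assoc]
        exact (not_congr hkey).symm
      · by_cases hyi : y = i
        · subst hyi
          have hxj : x ≠ j := fun h => hcase (Or.inr ⟨h, rfl⟩)
          have hA : (List.replicate (k-1) y).filter (fun z => decide (z = x ∨ z = y)) =
              List.replicate (k-1) y := by
            rw [List.filter_replicate]; simp
          have hIf : [y].filter (fun z => decide (z = x ∨ z = y)) = [y] := by simp
          rw [hA, hIf]
          have hBy : ∀ z ∈ π.filter (fun z => decide (z = x ∨ z = y)), z = x := by
            intro z hz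
            rw [List.mem_filter] at hz
            have h1 := (hπmem z).mp hz.1
            have h2 := hz.2
            simp only [decide_eq_true_eq] at h2
            tauto
          have hBne : π.filter (fun z => decide (z = x ∨ z = y)) ≠ [] := by
            apply List.ne_nil_of_mem (a := x)
            rw [List.mem_filter]
            exact ⟨(hπmem x).mpr ⟨hx, hxi, hxj⟩, by simp⟩
          have hkey := key_i hk y x (fun h => hxy h.symm) _ _ hBne hBy hπcount hyw hxw
          simp only [List.append_assoc]
          exact (not_congr hkey).symm
        · have hix : i ≠ x := fun h => hxi h.symm
          have hiy : i ≠ y := fun h => hyi h.symm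
          have hA : (List.replicate (k-1) i).filter (fun z => decide (z = x ∨ z = y)) =
              [] := by
            rw [List.filter_replicate]; simp [hix, hiy]
          have hIf : [i].filter (fun z => decide (z = x ∨ z = y)) = [] := by
            simp [hix, hiy]
          rw [hA, hIf]
          simp only [List.nil_append, List.append_nil, List.append_assoc]
          have hkey := key_general hk (π.filter (fun z => decide (z = x ∨ z = y))) _
            x y hxy hxw hyw hπcount
          exact (not_congr hkey).symm
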